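/- There is no general improvement from a single taxon under a molecular clock: for any rooted binary phylogenetic tree T with leaf set X evolving under the two-state symmetric model and satisfying a molecular clock (the net substitution probability from the root to every leaf equals the same value p), the reconstruction accuracy of Fitch's maximum parsimony on all taxa satisfies RA(X) ≥ 1 − p. -/

import Mathlib

/-!
Model: rooted binary phylogenetic trees whose edges carry substitution
probabilities, evolving binary characters (states `true` = α, `false` = β)
under the two-state symmetric (Neyman) model, and Fitch's maximum parsimony
algorithm.
-/

/-- A rooted binary tree; an internal node records the substitution
probabilities on the edges to its two children. -/
inductive PTree where
  | leaf : PTree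
  | node (p₁ p₂ : ℝ) (t₁ t₂ : PTree) : PTree

/-- The type of binary characters on a tree: an assignment of a state
(`true` = α, `false` = β) to each leaf. -/
def PTree.Char : PTree → Type
  | .leaf => Bool
  | .node _ _ t₁ t₂ => t₁.Char × t₂.Char

instance PTree.Char.instFintype : (t : PTree) → Fintype t.Char
  | .leaf => inferInstanceAs (Fintype Bool)
  | .node _ _ t₁ t₂ =>
      letI := PTree.Char.instFintype t₁
      letI := PTree.Char.instFintype t₂
      inferInstanceAs (Fintype (_ × _))

instance PTree.Char.instDecidableEq : (t : PTree) → DecidableEq t.Char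
  | .leaf => inferInstanceAs (DecidableEq Bool)
  | .node _ _ t₁ t₂ =>
      letI := PTree.Char.instDecidableEq t₁
      letI := PTree.Char.instDecidableEq t₂
      inferInstanceAs (DecidableEq (_ × _))

/-- Single-edge transition probability of the two-state symmetric model:
conditional on the parent being in state `s`, the child is in state `s'`
with probability `1 - p` if `s' = s` and `p` otherwise. -/
def transProb (p : ℝ) (s s' : Bool) : ℝ := if s' = s then 1 - p else p

/-- `t.charProb s c` is the probability that the character `c` is generated
at the leaves of `t` conditional on the root of `t` being in state `s`
(substitutions happen independently across edges). -/
def PTree.charProb : (t : PTree) → Bool → t.Char → ℝ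
  | .leaf, s, c => @ite _ (c = s) (instDecidableEqBool c s) 1 0
  | .node p₁ p₂ t₁ t₂, s, c =>
      (∑ s₁ : Bool, transProb p₁ s s₁ * t₁.charProb s₁ c.1) *
      (∑ s₂ : Bool, transProb p₂ s s₂ * t₂.charProb s₂ c.2)

/-- The state set assigned to the root by Fitch's maximum parsimony
algorithm: a leaf in state `s` gets `{s}`; an internal node gets the
intersection of the children's state sets if nonempty, else their union. -/
def PTree.fitch : (t : PTree) → t.Char → Finset Bool
  | .leaf, c => {c}
  | .node _ _ t₁ t₂, c =>
      if (t₁.fitch c.1 ∩ t₂.fitch c.2).Nonempty then t₁.fitch c.1 ∩ t₂.fitch c.2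
      else t₁.fitch c.1 ∪ t₂.fitch c.2

/-- `P_α`: probability, conditional on the root being in state α, that MP
returns the state set `{α}`. -/
noncomputable def PTree.probAlpha (t : PTree) : ℝ :=
  ∑ c : t.Char, if t.fitch c = {true} then t.charProb true c else 0

/-- `P_β`: probability, conditional on the root being in state α, that MP
returns the state set `{β}`. -/
noncomputable def PTree.probBeta (t : PTree) : ℝ :=
  ∑ c : t.Char, if t.fitch c = {false} then t.charProb true c else 0

/-- `P_{αβ}`: probability, conditional on the root being in state α, that MP
returns the state set `{α, β}`. -/
noncomputable def PTree.probBoth (t : PTree) : ℝ :=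
  ∑ c : t.Char, if t.fitch c = ({true, false} : Finset Bool) then t.charProb true c else 0

/-- The reconstruction accuracy `RA = UA + AA/2` of maximum parsimony on all
leaves of `t`, the conditioning root state being the root of `t` itself. -/
noncomputable def PTree.RA (t : PTree) : ℝ := t.probAlpha + t.probBoth / 2

/-- Probability of the character `c` on `t` conditional on the state `s` of an
ancestor vertex joined to the root of `t` by an edge of substitution
probability `p`. -/
noncomputable def PTree.charProbVia (t : PTree) (p : ℝ) (s : Bool) (c : t.Char) : ℝ :=
  ∑ s' : Bool, transProb p s s' * t.charProb s' c

/-- Reconstruction accuracy of MP applied to the subtree `t` (rooted at `y`),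
where the ancestral state being estimated is that of a vertex `ρ` joined to
`y` by an edge of substitution probability `p`:
`RA = P(MP = {α} | ρ = α) + (1/2)·P(MP = {α,β} | ρ = α)`. -/
noncomputable def PTree.RAVia (t : PTree) (p : ℝ) : ℝ :=
  (∑ c : t.Char, if t.fitch c = {true} then t.charProbVia p true c else 0) +
  (∑ c : t.Char, if t.fitch c = ({true, false} : Finset Bool) then t.charProbVia p true c else 0) / 2

/-- All edge substitution probabilities lie in `[0, 1/2]`. -/
def PTree.valid : PTree → Prop
  | .leaf => True
  | .node p₁ p₂ t₁ t₂ => 0 ≤ p₁ ∧ p₁ ≤ 1/2 ∧ 0 ≤ p₂ ∧ p₂ ≤ 1/2 ∧ t₁.valid ∧ t₂.valid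

/-- The list of net substitution probabilities from the root to each leaf
(obtained by chaining the single-edge substitution probabilities). -/
def PTree.leafFlipProbs : PTree → List ℝ
  | .leaf => [0]
  | .node p₁ p₂ t₁ t₂ =>
      (t₁.leafFlipProbs.map fun r => (1 - p₁) * r + p₁ * (1 - r)) ++
      (t₂.leafFlipProbs.map fun r => (1 - p₂) * r + p₂ * (1 - r))

/-- The balanced binary tree of depth `n` with substitution probability `q`
on every edge. -/
def balanced (q : ℝ) : ℕ → PTree
  | 0 => .leaf
  | n + 1 => .node q q (balanced q n) (balanced q n)

/-- `P_α(n,q)` for the balanced tree of depth `n`. -/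
noncomputable def Palpha (n : ℕ) (q : ℝ) : ℝ := (balanced q n).probAlpha

/-- `P_β(n,q)` for the balanced tree of depth `n`. -/
noncomputable def Pbeta (n : ℕ) (q : ℝ) : ℝ := (balanced q n).probBeta

/-- `P_{αβ}(n,q)` for the balanced tree of depth `n`. -/
noncomputable def Palphabeta (n : ℕ) (q : ℝ) : ℝ := (balanced q n).probBoth

/-! ### Auxiliary definitions and lemmas -/

/-- Fitch combination of two children state sets. -/
def combineFS (A B : Finset Bool) : Finset Bool :=
  if (A ∩ B).Nonempty then A ∩ B else A ∪ B

lemma fitch_node (p₁ p₂ : ℝ) (t₁ t₂ : PTree) (c : (PTree.node p₁ p₂ t₁ t₂).Char) :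
    (PTree.node p₁ p₂ t₁ t₂).fitch c = combineFS (t₁.fitch c.1) (t₂.fitch c.2) := rfl

lemma charProb_node (p₁ p₂ : ℝ) (t₁ t₂ : PTree) (s : Bool)
    (c : (PTree.node p₁ p₂ t₁ t₂).Char) :
    (PTree.node p₁ p₂ t₁ t₂).charProb s c =
      t₁.charProbVia p₁ s c.1 * t₂.charProbVia p₂ s c.2 := rfl

lemma charProb_leaf (s c : Bool) :
    PTree.leaf.charProb s c = if c = s then 1 else 0 := by
  simp only [PTree.charProb]; split_ifs <;> rfl

lemma fitch_nonempty : ∀ (t : PTree) (c : t.Char), (t.fitch c).Nonempty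
  | .leaf, c => ⟨c, by simp [PTree.fitch]; exact Finset.mem_singleton_self _⟩
  | .node p₁ p₂ t₁ t₂, c => by
      have h₁ := fitch_nonempty t₁ c.1
      rw [fitch_node]; unfold combineFS
      split_ifs with h
      · exact h
      · exact h₁.mono Finset.subset_union_left

lemma finsetBool_cases (s : Finset Bool) (hs : s.Nonempty) :
    s = {true} ∨ s = {false} ∨ s = {true, false} := by
  revert hs; revert s; decide

lemma sum_transProb (p : ℝ) (s : Bool) : ∑ s' : Bool, transProb p s s' = 1 := by
  cases s <;> simp [Fintype.sum_bool, transProb]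

lemma transProb_nonneg {p : ℝ} (h0 : 0 ≤ p) (h2 : p ≤ 1/2) (s s' : Bool) :
    0 ≤ transProb p s s' := by
  unfold transProb; split <;> linarith

lemma sum_charProb : ∀ (t : PTree) (s : Bool), ∑ c : t.Char, t.charProb s c = 1
  | .leaf, s => by
    exact (Fintype.sum_bool _).trans (by cases s <;> simp [charProb_leaf])
  | .node p₁ p₂ t₁ t₂, s => by
      have key : ∀ (u : PTree) (q : ℝ), (∀ s', ∑ c : u.Char, u.charProb s' c = 1) →
          ∑ c : u.Char, u.charProbVia q s c = 1 := by
        intro u q hu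
        unfold PTree.charProbVia
        rw [Finset.sum_comm]
        simp only [← Finset.mul_sum, hu, mul_one]
        exact sum_transProb q s
      have h₁ := key t₁ p₁ (sum_charProb t₁)
      have h₂ := key t₂ p₂ (sum_charProb t₂)
      simp only [charProb_node]
      erw [Fintype.sum_prod_type]
      rw [← Finset.sum_mul_sum, h₁, h₂, mul_one]

lemma charProbVia_nonneg : ∀ (t : PTree), t.valid → ∀ {q : ℝ}, 0 ≤ q → q ≤ 1/2 →
    ∀ (s : Bool) (c : t.Char), 0 ≤ t.charProbVia q s c := by
  have main : ∀ (t : PTree), t.valid → ∀ (s : Bool) (c : t.Char), 0 ≤ t.charProb s c := by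
    intro t
    induction t with
    | leaf => intro _ s c; exact le_of_le_of_eq (by split <;> norm_num) (charProb_leaf s c).symm
    | node p₁ p₂ t₁ t₂ ih₁ ih₂ =>
        rintro ⟨h1, h2, h3, h4, hv₁, hv₂⟩ s c
        simp only [PTree.charProb]
        refine mul_nonneg (Finset.sum_nonneg fun s₁ _ => ?_) (Finset.sum_nonneg fun s₂ _ => ?_)
        · exact mul_nonneg (transProb_nonneg h1 h2 _ _) (ih₁ hv₁ s₁ c.1)
        · exact mul_nonneg (transProb_nonneg h3 h4 _ _) (ih₂ hv₂ s₂ c.2)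
  intro t hv q hq0 hq2 s c
  exact Finset.sum_nonneg fun s' _ =>
    mul_nonneg (transProb_nonneg hq0 hq2 _ _) (main t hv s' c)

lemma charProb_nonneg (t : PTree) (hv : t.valid) (s : Bool) (c : t.Char) :
    0 ≤ t.charProb s c := by
  have main : ∀ (t : PTree), t.valid → ∀ (s : Bool) (c : t.Char), 0 ≤ t.charProb s c := by
    intro t
    induction t with
    | leaf => intro _ s c; exact le_of_le_of_eq (by split <;> norm_num) (charProb_leaf s c).symm
    | node p₁ p₂ t₁ t₂ ih₁ ih₂ =>
        rintro ⟨h1, h2, h3, h4, hv₁, hv₂⟩ s c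
        simp only [PTree.charProb]
        refine mul_nonneg (Finset.sum_nonneg fun s₁ _ => ?_) (Finset.sum_nonneg fun s₂ _ => ?_)
        · exact mul_nonneg (transProb_nonneg h1 h2 _ _) (ih₁ hv₁ s₁ c.1)
        · exact mul_nonneg (transProb_nonneg h3 h4 _ _) (ih₂ hv₂ s₂ c.2)
  exact main t hv s c

/-- Flip all leaf states of a character. -/
def PTree.flipChar : (t : PTree) → t.Char → t.Char
  | .leaf, c => !c
  | .node _ _ t₁ t₂, c => (t₁.flipChar c.1, t₂.flipChar c.2)

lemma flipChar_involutive (t : PTree) : Function.Involutive t.flipChar := by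
  induction t with
  | leaf => intro c; simp [PTree.flipChar]; exact Bool.not_not _
  | node p₁ p₂ t₁ t₂ ih₁ ih₂ =>
      intro c; simp only [PTree.flipChar]
      exact Prod.ext (ih₁ c.1) (ih₂ c.2)

lemma charProb_flip : ∀ (t : PTree) (s : Bool) (c : t.Char),
    t.charProb s (t.flipChar c) = t.charProb (!s) c
  | .leaf, s, c => by cases s <;> cases c <;> simp [charProb_leaf, PTree.flipChar]
  | .node p₁ p₂ t₁ t₂, s, c => by
      have h₁ := charProb_flip t₁
      have h₂ := charProb_flip t₂
      simp only [PTree.charProb, PTree.flipChar]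
      congr 1
      · rw [Fintype.sum_bool, Fintype.sum_bool, h₁ true c.1, h₁ false c.1]
        cases s <;> simp [transProb] <;> ring
      · rw [Fintype.sum_bool, Fintype.sum_bool, h₂ true c.2, h₂ false c.2]
        cases s <;> simp [transProb] <;> ring

lemma combineFS_image_not (A B : Finset Bool) :
    combineFS (A.image (fun b => !b)) (B.image (fun b => !b)) =
      (combineFS A B).image (fun b => !b) := by
  revert A B; decide

lemma fitch_flip : ∀ (t : PTree) (c : t.Char),
    t.fitch (t.flipChar c) = (t.fitch c).image (fun b => !b)
  | .leaf, c => by cases c <;> simp [PTree.fitch, PTree.flipChar] <;> decide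
  | .node p₁ p₂ t₁ t₂, c => by
      have h₁ := fitch_flip t₁ c.1
      have h₂ := fitch_flip t₂ c.2
      show combineFS (t₁.fitch (t₁.flipChar c.1)) (t₂.fitch (t₂.flipChar c.2)) = _
      rw [h₁, h₂, combineFS_image_not]
      rfl

/-- Probability that Fitch returns `A`, conditional on root state `s`. -/
noncomputable def PTree.Ws (t : PTree) (s : Bool) (A : Finset Bool) : ℝ :=
  ∑ c : t.Char, if t.fitch c = A then t.charProb s c else 0

/-- Probability that Fitch returns `A`, conditional on the state `true` of an
ancestor above an edge with substitution probability `p`. -/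
noncomputable def PTree.Wv (t : PTree) (p : ℝ) (A : Finset Bool) : ℝ :=
  ∑ c : t.Char, if t.fitch c = A then t.charProbVia p true c else 0

lemma probAlpha_eq (t : PTree) : t.probAlpha = t.Ws true {true} := rfl
lemma probBeta_eq (t : PTree) : t.probBeta = t.Ws true {false} := rfl
lemma probBoth_eq (t : PTree) : t.probBoth = t.Ws true {true, false} := rfl

lemma image_not_involutive (A : Finset Bool) :
    (A.image (fun b => !b)).image (fun b => !b) = A := by revert A; decide

lemma congr_if_cond {P Q : Prop} [Decidable P] [Decidable Q] (h : P ↔ Q) (a b : ℝ) :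
    (if P then a else b) = (if Q then a else b) := by
  split <;> split <;> first | rfl | (exfalso; tauto)

lemma Ws_flip (t : PTree) (s : Bool) (A : Finset Bool) :
    t.Ws (!s) A = t.Ws s (A.image (fun b => !b)) := by
  unfold PTree.Ws
  rw [← Function.Bijective.sum_comp ((flipChar_involutive t).bijective)
    (fun c => if t.fitch c = A.image (fun b => !b) then t.charProb s c else 0)]
  refine Finset.sum_congr rfl fun c _ => ?_
  rw [fitch_flip, charProb_flip]
  exact congr_if_cond ⟨fun h => by rw [h],
    fun h => by rw [← image_not_involutive (t.fitch c), h, image_not_involutive]⟩ _ _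

lemma Ws_nonneg (t : PTree) (hv : t.valid) (s : Bool) (A : Finset Bool) :
    0 ≤ t.Ws s A :=
  Finset.sum_nonneg fun c _ => by
    split
    · exact charProb_nonneg t hv s c
    · exact le_refl 0

lemma Wv_eq (t : PTree) (p : ℝ) (A : Finset Bool) :
    t.Wv p A = (1 - p) * t.Ws true A + p * t.Ws false A := by
  unfold PTree.Wv PTree.Ws PTree.charProbVia
  rw [Finset.mul_sum, Finset.mul_sum, ← Finset.sum_add_distrib]
  refine Finset.sum_congr rfl fun c _ => ?_
  rw [Fintype.sum_bool]
  simp only [transProb, mul_ite, mul_zero]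
  split <;> simp

lemma sum_fitch_split (t : PTree) (g : t.Char → ℝ) (G : Finset Bool → ℝ) :
    ∑ c : t.Char, G (t.fitch c) * g c =
      G {true} * (∑ c : t.Char, if t.fitch c = {true} then g c else 0) +
      G {false} * (∑ c : t.Char, if t.fitch c = {false} then g c else 0) +
      G {true, false} * (∑ c : t.Char, if t.fitch c = {true, false} then g c else 0) := by
  rw [Finset.mul_sum, Finset.mul_sum, Finset.mul_sum, ← Finset.sum_add_distrib,
    ← Finset.sum_add_distrib]
  refine Finset.sum_congr rfl fun c _ => ?_
  rcases finsetBool_cases _ (fitch_nonempty t c) with h | h | h <;> rw [h]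
  · rw [if_pos rfl, if_neg (by decide), if_neg (by decide)]; ring
  · rw [if_neg (by decide), if_pos rfl, if_neg (by decide)]; ring
  · rw [if_neg (by decide), if_neg (by decide), if_pos rfl]; ring

lemma Ws_total (t : PTree) (s : Bool) :
    t.Ws s {true} + t.Ws s {false} + t.Ws s {true, false} = 1 := by
  have := sum_fitch_split t (t.charProb s) (fun _ => 1)
  simp only [one_mul] at this
  unfold PTree.Ws
  rw [← this]
  exact sum_charProb t s

lemma Wv_total (t : PTree) (p : ℝ) :
    t.Wv p {true} + t.Wv p {false} + t.Wv p {true, false} = 1 := by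
  simp only [Wv_eq]
  have h1 := Ws_total t true
  have h2 := Ws_total t false
  linear_combination (1 - p) * h1 + p * h2

lemma Wv_nonneg (t : PTree) (hv : t.valid) {p : ℝ} (h0 : 0 ≤ p) (h2 : p ≤ 1/2)
    (A : Finset Bool) : 0 ≤ t.Wv p A := by
  rw [Wv_eq]
  have := Ws_nonneg t hv true A
  have := Ws_nonneg t hv false A
  nlinarith

lemma Wv_sub (t : PTree) (p : ℝ) :
    t.Wv p {true} - t.Wv p {false} = (1 - 2*p) * (t.probAlpha - t.probBeta) := by
  rw [Wv_eq, Wv_eq, probAlpha_eq, probBeta_eq]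
  have e1 : t.Ws false {true} = t.Ws true {false} := by
    have := Ws_flip t true {true}
    simpa using this
  have e2 : t.Ws false {false} = t.Ws true {true} := by
    have := Ws_flip t true {false}
    simpa using this
  rw [e1, e2]; ring

lemma Wv_both (t : PTree) (p : ℝ) : t.Wv p {true, false} = t.probBoth := by
  rw [Wv_eq, probBoth_eq]
  have e : t.Ws false {true, false} = t.Ws true {true, false} := by
    have := Ws_flip t true {true, false}
    have him : ({true, false} : Finset Bool).image (fun b => !b) = {true, false} := by decide
    rw [him] at this
    simpa using this
  rw [e]; ring

lemma Ws_node (p₁ p₂ : ℝ) (t₁ t₂ : PTree) (S : Finset Bool) :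
    (PTree.node p₁ p₂ t₁ t₂).Ws true S =
      (if combineFS {true} {true} = S then t₁.Wv p₁ {true} * t₂.Wv p₂ {true} else 0) +
      (if combineFS {true} {false} = S then t₁.Wv p₁ {true} * t₂.Wv p₂ {false} else 0) +
      (if combineFS {true} {true,false} = S then t₁.Wv p₁ {true} * t₂.Wv p₂ {true,false} else 0) +
      (if combineFS {false} {true} = S then t₁.Wv p₁ {false} * t₂.Wv p₂ {true} else 0) +
      (if combineFS {false} {false} = S then t₁.Wv p₁ {false} * t₂.Wv p₂ {false} else 0) +
      (if combineFS {false} {true,false} = S then t₁.Wv p₁ {false} * t₂.Wv p₂ {true,false} else 0) +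
      (if combineFS {true,false} {true} = S then t₁.Wv p₁ {true,false} * t₂.Wv p₂ {true} else 0) +
      (if combineFS {true,false} {false} = S then t₁.Wv p₁ {true,false} * t₂.Wv p₂ {false} else 0) +
      (if combineFS {true,false} {true,false} = S then t₁.Wv p₁ {true,false} * t₂.Wv p₂ {true,false} else 0) := by
  unfold PTree.Ws
  simp only [fitch_node, charProb_node]
  erw [Fintype.sum_prod_type]
  have inner : ∀ c₁ : t₁.Char,
      (∑ c₂ : t₂.Char, if combineFS (t₁.fitch c₁) (t₂.fitch c₂) = S
        then t₁.charProbVia p₁ true c₁ * t₂.charProbVia p₂ true c₂ else 0)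
      = (fun A : Finset Bool =>
          ((if combineFS A {true} = S then t₂.Wv p₂ {true} else 0) +
           (if combineFS A {false} = S then t₂.Wv p₂ {false} else 0) +
           (if combineFS A {true,false} = S then t₂.Wv p₂ {true,false} else 0)))
          (t₁.fitch c₁) * t₁.charProbVia p₁ true c₁ := by
    intro c₁
    have hs := sum_fitch_split t₂ (fun c₂ => t₂.charProbVia p₂ true c₂)
      (fun B => if combineFS (t₁.fitch c₁) B = S then 1 else 0)
    have lhs_eq : (∑ c₂ : t₂.Char, if combineFS (t₁.fitch c₁) (t₂.fitch c₂) = S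
        then t₁.charProbVia p₁ true c₁ * t₂.charProbVia p₂ true c₂ else 0)
        = t₁.charProbVia p₁ true c₁ *
          ∑ c₂ : t₂.Char, (if combineFS (t₁.fitch c₁) (t₂.fitch c₂) = S then 1 else 0) *
            t₂.charProbVia p₂ true c₂ := by
      rw [Finset.mul_sum]
      refine Finset.sum_congr rfl fun c₂ _ => ?_
      split <;> simp
    rw [lhs_eq, hs]
    show _ = ((if _ then t₂.Wv p₂ {true} else 0) + (if _ then t₂.Wv p₂ {false} else 0) +
      (if _ then t₂.Wv p₂ {true,false} else 0)) * t₁.charProbVia p₁ true c₁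
    unfold PTree.Wv
    simp only [boole_mul]
    ring
  refine (Finset.sum_congr rfl fun c₁ _ => inner c₁).trans ?_
  beta_reduce
  rw [sum_fitch_split t₁ (fun c₁ => t₁.charProbVia p₁ true c₁)
    (fun A => ((if combineFS A {true} = S then t₂.Wv p₂ {true} else 0) +
      (if combineFS A {false} = S then t₂.Wv p₂ {false} else 0) +
      (if combineFS A {true,false} = S then t₂.Wv p₂ {true,false} else 0)))]
  unfold PTree.Wv
  simp only [add_mul, ite_mul, zero_mul, mul_ite, mul_zero]
  ring_nf

lemma probAlpha_node (p₁ p₂ : ℝ) (t₁ t₂ : PTree) :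
    (PTree.node p₁ p₂ t₁ t₂).probAlpha =
      t₁.Wv p₁ {true} * t₂.Wv p₂ {true} + t₁.Wv p₁ {true} * t₂.Wv p₂ {true,false} +
      t₁.Wv p₁ {true,false} * t₂.Wv p₂ {true} := by
  rw [probAlpha_eq, Ws_node,
    if_pos (by decide), if_neg (by decide), if_pos (by decide),
    if_neg (by decide), if_neg (by decide), if_neg (by decide),
    if_pos (by decide), if_neg (by decide), if_neg (by decide)]
  ring

lemma probBeta_node (p₁ p₂ : ℝ) (t₁ t₂ : PTree) :
    (PTree.node p₁ p₂ t₁ t₂).probBeta =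
      t₁.Wv p₁ {false} * t₂.Wv p₂ {false} + t₁.Wv p₁ {false} * t₂.Wv p₂ {true,false} +
      t₁.Wv p₁ {true,false} * t₂.Wv p₂ {false} := by
  rw [probBeta_eq, Ws_node,
    if_neg (by decide), if_neg (by decide), if_neg (by decide),
    if_neg (by decide), if_pos (by decide), if_pos (by decide),
    if_neg (by decide), if_pos (by decide), if_neg (by decide)]
  ring

lemma leafFlipProbs_ne_nil : ∀ t : PTree, t.leafFlipProbs ≠ []
  | .leaf => by simp [PTree.leafFlipProbs]
  | .node p₁ p₂ t₁ t₂ => by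
      have h₁ := leafFlipProbs_ne_nil t₁
      simp [PTree.leafFlipProbs, h₁]

lemma leafFlipProbs_bounds : ∀ (t : PTree), t.valid →
    ∀ r ∈ t.leafFlipProbs, 0 ≤ r ∧ r ≤ 1/2
  | .leaf, _, r, hr => by
      simp [PTree.leafFlipProbs] at hr
      norm_num [hr]
  | .node p₁ p₂ t₁ t₂, ⟨h1, h2, h3, h4, hv₁, hv₂⟩, r, hr => by
      simp only [PTree.leafFlipProbs, List.mem_append, List.mem_map] at hr
      rcases hr with ⟨r', hr', rfl⟩ | ⟨r', hr', rfl⟩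
      · obtain ⟨hr0, hr2⟩ := leafFlipProbs_bounds t₁ hv₁ r' hr'
        constructor <;> nlinarith
      · obtain ⟨hr0, hr2⟩ := leafFlipProbs_bounds t₂ hv₂ r' hr'
        constructor <;> nlinarith

lemma probAlpha_leaf : PTree.leaf.probAlpha = 1 := by
  show (∑ c : Bool, if PTree.leaf.fitch c = {true} then PTree.leaf.charProb true c else 0) = 1
  rw [Fintype.sum_bool]
  simp [PTree.fitch, charProb_leaf] <;> decide

lemma probBeta_leaf : PTree.leaf.probBeta = 0 := by
  show (∑ c : Bool, if PTree.leaf.fitch c = {false} then PTree.leaf.charProb true c else 0) = 0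
  rw [Fintype.sum_bool]
  simp [PTree.fitch, charProb_leaf] <;> decide

lemma key : ∀ (t : PTree), t.valid → ∀ (δ : ℝ),
    (∀ r ∈ t.leafFlipProbs, 1 - 2*r = δ) → δ ≤ t.probAlpha - t.probBeta
  | .leaf, _, δ, hδ => by
      have h := hδ 0 (by simp [PTree.leafFlipProbs])
      rw [probAlpha_leaf, probBeta_leaf]
      norm_num at h ⊢
      linarith
  | .node p₁ p₂ t₁ t₂, ⟨h1, h2, h3, h4, hv₁, hv₂⟩, δ, hδ => by
      have hvn : (PTree.node p₁ p₂ t₁ t₂).valid := ⟨h1, h2, h3, h4, hv₁, hv₂⟩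
      obtain ⟨r₀, hr₀⟩ := List.exists_mem_of_ne_nil _
        (leafFlipProbs_ne_nil (PTree.node p₁ p₂ t₁ t₂))
      have hδ0 : 0 ≤ δ := by
        have hb := leafFlipProbs_bounds _ hvn r₀ hr₀
        have := hδ r₀ hr₀
        linarith [hb.2]
      have child : ∀ (q : ℝ) (u : PTree), 0 ≤ q → q ≤ 1/2 → u.valid →
          (∀ r ∈ u.leafFlipProbs, 1 - 2*((1-q)*r + q*(1-r)) = δ) →
          (∀ δ', (∀ r ∈ u.leafFlipProbs, 1 - 2*r = δ') → δ' ≤ u.probAlpha - u.probBeta) →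
          δ ≤ u.Wv q {true} - u.Wv q {false} := by
        intro q u hq0 hq2 hu hclk ih
        rw [Wv_sub]
        rcases eq_or_lt_of_le hq2 with he | hlt
        · obtain ⟨r₁, hr₁⟩ := List.exists_mem_of_ne_nil _ (leafFlipProbs_ne_nil u)
          have h' := hclk r₁ hr₁
          have hδe : δ = 0 := by rw [← h', he]; ring
          rw [hδe, he]
          norm_num
        · have hpos : 0 < 1 - 2*q := by linarith
          have hbound := ih (δ / (1 - 2*q)) (fun r hr => by
            have h' := hclk r hr
            rw [eq_div_iff hpos.ne']
            linear_combination h')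
          have h' := mul_le_mul_of_nonneg_right hbound (le_of_lt hpos)
          have he : δ / (1 - 2*q) * (1 - 2*q) = δ := by field_simp
          rw [mul_comm]
          linarith
      have clock₁ : ∀ r ∈ t₁.leafFlipProbs, 1 - 2*((1-p₁)*r + p₁*(1-r)) = δ := by
        intro r hr
        exact hδ _ (List.mem_append_left _ (List.mem_map_of_mem hr))
      have clock₂ : ∀ r ∈ t₂.leafFlipProbs, 1 - 2*((1-p₂)*r + p₂*(1-r)) = δ := by
        intro r hr
        exact hδ _ (List.mem_append_right _ (List.mem_map_of_mem hr))
      have hx := child p₁ t₁ h1 h2 hv₁ clock₁ (fun δ' h => key t₁ hv₁ δ' h)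
      have hy := child p₂ t₂ h3 h4 hv₂ clock₂ (fun δ' h => key t₂ hv₂ δ' h)
      have hz₁ : 0 ≤ t₁.Wv p₁ {true, false} := Wv_nonneg t₁ hv₁ h1 h2 _
      have hz₂ : 0 ≤ t₂.Wv p₂ {true, false} := Wv_nonneg t₂ hv₂ h3 h4 _
      have ht₁ := Wv_total t₁ p₁
      have ht₂ := Wv_total t₂ p₂
      rw [probAlpha_node, probBeta_node]
      set x₁ := t₁.Wv p₁ {true}
      set y₁ := t₁.Wv p₁ {false}
      set z₁ := t₁.Wv p₁ {true, false}
      set x₂ := t₂.Wv p₂ {true}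
      set y₂ := t₂.Wv p₂ {false}
      set z₂ := t₂.Wv p₂ {true, false}
      have hid : (x₁ * x₂ + x₁ * z₂ + z₁ * x₂) - (y₁ * y₂ + y₁ * z₂ + z₁ * y₂)
          = (x₁ - y₁) * (1 + z₂) / 2 + (x₂ - y₂) * (1 + z₁) / 2 := by
        linear_combination ((x₂ - y₂)/2) * ht₁ + ((x₁ - y₁)/2) * ht₂
      rw [hid]
      nlinarith [mul_nonneg (by linarith : (0:ℝ) ≤ x₁ - y₁ - δ) (by linarith : (0:ℝ) ≤ 1 + z₂),
        mul_nonneg (by linarith : (0:ℝ) ≤ x₂ - y₂ - δ) (by linarith : (0:ℝ) ≤ 1 + z₁),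
        mul_nonneg hδ0 hz₁, mul_nonneg hδ0 hz₂]
/-- for any rooted binary phylogenetic tree evolving under the
two-state symmetric model and satisfying a molecular clock (the net
substitution probability from the root to every leaf equals the same value
`p`), the reconstruction accuracy of Fitch's maximum parsimony on all taxa
satisfies `RA(X) ≥ 1 − p`. -/
theorem stmt8 (t : PTree) (hv : t.valid) (p : ℝ)
    (hclock : ∀ r ∈ t.leafFlipProbs, r = p) :
    t.RA ≥ 1 - p := by
  have h := key t hv (1 - 2*p) (fun r hr => by rw [hclock r hr])
  have htot : t.probAlpha + t.probBeta + t.probBoth = 1 := by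
    rw [probAlpha_eq, probBeta_eq, probBoth_eq]
    exact Ws_total t true
  unfold PTree.RA
  linarith
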